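/- arXiv:math/0102199 — 2 statements merged into one kernel-verified Lean document; each statement's English description precedes it below -/
import Mathlib

section
/- The union of finitely many i-isolated cores is again an i-isolated core. -/
open scoped BigOperators Classical
open Filter MeasureTheory

variable {V : Type*}

/-- Vertex weight: sum of incident edge weights. -/
noncomputable def vtxWeight (w : V → V → ℝ) (v : V) : ℝ := ∑' u, w v u

/-- Volume of a finite vertex set. -/
noncomputable def vol (w : V → V → ℝ) (S : Finset V) : ℝ := ∑ v ∈ S, vtxWeight w v

/-- Volume of the edge boundary of a finite vertex set. -/
noncomputable def bdry (w : V → V → ℝ) (S : Finset V) : ℝ :=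
  ∑ v ∈ S, ∑' u, ((↑S : Set V)ᶜ).indicator (w v) u

/-- The `i`-isolation `Δ_i S = i|S| - |∂S|`. -/
noncomputable def isol (i : ℝ) (w : V → V → ℝ) (S : Finset V) : ℝ :=
  i * vol w S - bdry w S

/-- An `i`-isolated core: `Δ_i` strictly dominates `Δ_i` of every proper subset. -/
def IsCore (i : ℝ) (w : V → V → ℝ) (S : Finset V) : Prop :=
  ∀ A : Finset V, A ⊂ S → isol i w A < isol i w S

/-- The union `A_i` of all `i`-isolated cores. -/
def coreUnion (i : ℝ) (w : V → V → ℝ) : Set V :=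
  {v | ∃ S : Finset V, IsCore i w S ∧ v ∈ S}

/-- The underlying graph of a weighted graph: adjacency iff positive weight. -/
noncomputable def gra (w : V → V → ℝ) : SimpleGraph V :=
  SimpleGraph.fromRel (fun u v => 0 < w u v)

/-- A set of vertices is connected if its induced subgraph is connected. -/
def ConnSet (w : V → V → ℝ) (S : Set V) : Prop :=
  (SimpleGraph.induce S (gra w)).Connected

/-- `i`-anchored expansion: every vertex lies in only finitely many connected
finite vertex sets with positive `i`-isolation. -/
def Anchored (i : ℝ) (w : V → V → ℝ) : Prop :=
  ∀ v : V, {S : Finset V | v ∈ S ∧ ConnSet w (↑S) ∧ 0 < isol i w S}.Finite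

/-- An `i`-island: a connected component of `A_i`. -/
def IsIsland (i : ℝ) (w : V → V → ℝ) (C : Set V) : Prop :=
  C.Nonempty ∧ C ⊆ coreUnion i w ∧ ConnSet w C ∧
    ∀ C' : Set V, C ⊆ C' → C' ⊆ coreUnion i w → ConnSet w C' → C' = C

/-- Transition kernel of the random walk on the weighted graph. -/
noncomputable def markov (w : V → V → ℝ) (u v : V) : ℝ := w u v / vtxWeight w u

/-- `n`-step transition kernel of a Markov kernel `p`. -/
noncomputable def kern (p : V → V → ℝ) : ℕ → V → V → ℝ
  | 0, x, y => if x = y then 1 else 0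
  | n + 1, x, y => ∑' z, p x z * kern p n z y

section aux
variable [DecidableEq V]

/-- boundary contribution of a single vertex -/
noncomputable def eb (w : V → V → ℝ) (X : Finset V) (v : V) : ℝ :=
  ∑' u, ((↑X : Set V)ᶜ).indicator (w v) u

lemma eb_summable (w : V → V → ℝ) (hsum : ∀ v, Summable (w v)) (v : V) (X : Finset V) :
    Summable (((↑X : Set V)ᶜ).indicator (w v)) :=
  (hsum v).indicator _

lemma eb_modular (w : V → V → ℝ) (hsum : ∀ v, Summable (w v)) (v : V) (S T : Finset V) :
    eb w (S ∪ T) v + eb w (S ∩ T) v = eb w S v + eb w T v := by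
  unfold eb
  rw [← Summable.tsum_add (eb_summable w hsum v (S ∪ T)) (eb_summable w hsum v (S ∩ T)),
      ← Summable.tsum_add (eb_summable w hsum v S) (eb_summable w hsum v T)]
  congr 1
  funext u
  by_cases hu : u ∈ S <;> by_cases hv : u ∈ T <;>
    simp [Set.indicator_apply, hu, hv]

lemma eb_mono (w : V → V → ℝ) (hnn : ∀ u v, 0 ≤ w u v) (hsum : ∀ v, Summable (w v))
    (v : V) {S T : Finset V} (h : S ⊆ T) : eb w T v ≤ eb w S v := by
  refine Summable.tsum_le_tsum (fun u => ?_) (eb_summable w hsum v T) (eb_summable w hsum v S)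
  exact Set.indicator_le_indicator_of_subset
    (Set.compl_subset_compl.2 (by exact_mod_cast Finset.coe_subset.2 h)) (fun a => hnn v a) u

lemma bdry_submodular (w : V → V → ℝ) (hnn : ∀ u v, 0 ≤ w u v) (hsum : ∀ v, Summable (w v))
    (S T : Finset V) : bdry w (S ∪ T) + bdry w (S ∩ T) ≤ bdry w S + bdry w T := by
  have hb : ∀ X : Finset V, bdry w X = ∑ v ∈ X, eb w X v := fun X => rfl
  have hST : S ∩ T ⊆ S := Finset.inter_subset_left
  have hTT : S ∩ T ⊆ T := Finset.inter_subset_right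
  have h1 : ∑ v ∈ S ∪ T, eb w (S ∪ T) v
      = ∑ v ∈ S, eb w (S ∪ T) v + ∑ v ∈ T \ S, eb w (S ∪ T) v := by
    rw [← Finset.sum_union Finset.disjoint_sdiff, Finset.union_sdiff_self_eq_union]
  have h2 : ∀ f : V → ℝ, ∑ v ∈ S, f v = ∑ v ∈ S \ T, f v + ∑ v ∈ S ∩ T, f v := by
    intro f; rw [← Finset.sum_sdiff hST, Finset.sdiff_inter_self_left]
  have h3 : ∀ f : V → ℝ, ∑ v ∈ T, f v = ∑ v ∈ T \ S, f v + ∑ v ∈ S ∩ T, f v := by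
    intro f; rw [← Finset.sum_sdiff hTT, Finset.inter_comm, Finset.sdiff_inter_self_left]
  rw [hb, hb, hb, hb, h1, h2 (eb w S), h3 (eb w T), h2 (eb w (S ∪ T))]
  have key : ∑ v ∈ S ∩ T, eb w (S ∪ T) v + ∑ v ∈ S ∩ T, eb w (S ∩ T) v
      = ∑ v ∈ S ∩ T, eb w S v + ∑ v ∈ S ∩ T, eb w T v := by
    rw [← Finset.sum_add_distrib, ← Finset.sum_add_distrib]
    exact Finset.sum_congr rfl fun v _ => eb_modular w hsum v S T
  have m1 : ∑ v ∈ S \ T, eb w (S ∪ T) v ≤ ∑ v ∈ S \ T, eb w S v :=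
    Finset.sum_le_sum fun v _ => eb_mono w hnn hsum v Finset.subset_union_left
  have m2 : ∑ v ∈ T \ S, eb w (S ∪ T) v ≤ ∑ v ∈ T \ S, eb w T v :=
    Finset.sum_le_sum fun v _ => eb_mono w hnn hsum v Finset.subset_union_right
  linarith

lemma isol_supermodular (w : V → V → ℝ) (hnn : ∀ u v, 0 ≤ w u v) (hsum : ∀ v, Summable (w v))
    (i : ℝ) (S T : Finset V) :
    isol i w S + isol i w T ≤ isol i w (S ∪ T) + isol i w (S ∩ T) := by
  have hb := bdry_submodular w hnn hsum S T
  have hv : vol w (S ∪ T) + vol w (S ∩ T) = vol w S + vol w T := Finset.sum_union_inter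
  have hv' : i * vol w (S ∪ T) + i * vol w (S ∩ T) = i * vol w S + i * vol w T := by
    rw [← mul_add, ← mul_add, hv]
  unfold isol
  linarith

lemma core_union_two (w : V → V → ℝ) (hnn : ∀ u v, 0 ≤ w u v) (hsum : ∀ v, Summable (w v))
    (i : ℝ) {S T : Finset V} (hS : IsCore i w S) (hT : IsCore i w T) :
    IsCore i w (S ∪ T) := by
  have step : ∀ B : Finset V, B ⊂ S ∪ T → S ⊆ B → isol i w B < isol i w (S ∪ T) := by
    intro B hB hSB
    have hBT : B ∩ T ⊂ T := by
      refine ⟨Finset.inter_subset_right, fun hsub => hB.2 ?_⟩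
      intro x hx
      rcases Finset.mem_union.1 hx with h | h
      · exact hSB h
      · exact Finset.mem_of_mem_inter_left (hsub h)
    have h1 : isol i w (B ∩ T) < isol i w T := hT _ hBT
    have h2 := isol_supermodular w hnn hsum i B T
    have hBTu : B ∪ T = S ∪ T :=
      Finset.Subset.antisymm (Finset.union_subset hB.1 Finset.subset_union_right)
        (Finset.union_subset (hSB.trans Finset.subset_union_left) Finset.subset_union_right)
    rw [hBTu] at h2
    linarith
  intro A hA
  by_cases hSA : S ⊆ A
  · exact step A hA hSA
  · have hAS : A ∩ S ⊂ S := by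
      refine ⟨Finset.inter_subset_right, fun hsub => hSA fun x hx => ?_⟩
      exact Finset.mem_of_mem_inter_left (hsub hx)
    have h1 : isol i w (A ∩ S) < isol i w S := hS _ hAS
    have h2 := isol_supermodular w hnn hsum i A S
    have h3 : isol i w A < isol i w (A ∪ S) := by linarith
    by_cases hAS' : A ∪ S = S ∪ T
    · rw [hAS'] at h3; exact h3
    · have h4 : A ∪ S ⊂ S ∪ T :=
        ⟨Finset.union_subset hA.1 Finset.subset_union_left, fun h => hAS' (Finset.Subset.antisymm
          (Finset.union_subset hA.1 Finset.subset_union_left) h)⟩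
      have h5 := step (A ∪ S) h4 Finset.subset_union_right
      linarith

end aux

theorem core_union [DecidableEq V] (w : V → V → ℝ)
    (hsymm : ∀ u v, w u v = w v u) (hnn : ∀ u v, 0 ≤ w u v)
    (hsum : ∀ v, Summable (w v)) (i : ℝ) (hi0 : 0 < i) (hi1 : i < 1)
    (n : ℕ) (S : Fin n → Finset V) (hS : ∀ j, IsCore i w (S j)) :
    IsCore i w (Finset.univ.biUnion S) := by
  have main : ∀ (s : Finset (Fin n)), IsCore i w (s.biUnion S) := by
    intro s
    induction s using Finset.induction_on with
    | empty =>
      intro A hA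
      simp only [Finset.biUnion_empty] at hA
      exact absurd hA (by simp)
    | insert _ _ hj ih =>
      rw [Finset.biUnion_insert]
      exact core_union_two w hnn hsum i (hS _) ih
  exact main Finset.univ
end

section
/- Let G be a connected graph with i-anchored expansion and edge weights bounded below by 1. If S is a union of i-islands each of volume at most 1/i' for some i' > 0, then S is disjoint from A_{i'}, i.e., S ⊆ V ∖ A_{i'}. -/
open scoped BigOperators Classical
open Filter MeasureTheory

variable {V : Type*}

section Helpers

variable {V : Type*}

lemma vtxWeight_nonneg (w : V → V → ℝ) (hnn : ∀ u v, 0 ≤ w u v) (v : V) :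
    0 ≤ vtxWeight w v := tsum_nonneg (fun u => hnn v u)

lemma vol_mono (w : V → V → ℝ) (hnn : ∀ u v, 0 ≤ w u v) {A B : Finset V} (h : A ⊆ B) :
    vol w A ≤ vol w B :=
  Finset.sum_le_sum_of_subset_of_nonneg h (fun v _ _ => vtxWeight_nonneg w hnn v)

lemma isol_empty (i : ℝ) (w : V → V → ℝ) : isol i w (∅ : Finset V) = 0 := by
  simp [isol, vol, bdry]

lemma core_isol_pos {i : ℝ} {w : V → V → ℝ} {T : Finset V} (hT : IsCore i w T)
    (hne : T.Nonempty) : 0 < isol i w T := by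
  have := hT ∅ (Finset.empty_ssubset.2 hne)
  rwa [isol_empty] at this

lemma gra_adj {w : V → V → ℝ} (hsymm : ∀ u v, w u v = w v u) {u v : V} :
    (gra w).Adj u v ↔ u ≠ v ∧ 0 < w u v := by
  rw [gra, SimpleGraph.fromRel_adj]
  constructor
  · rintro ⟨h, h2 | h2⟩
    · exact ⟨h, h2⟩
    · exact ⟨h, (hsymm u v).symm ▸ h2⟩
  · rintro ⟨h, h2⟩
    exact ⟨h, Or.inl h2⟩

lemma bdry_union_of_no_edges {w : V → V → ℝ} (hnn : ∀ u v, 0 ≤ w u v)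
    {A B : Finset V} (hd : Disjoint A B)
    (hAB : ∀ a ∈ A, ∀ b ∈ B, w a b = 0) (hBA : ∀ b ∈ B, ∀ a ∈ A, w b a = 0) :
    bdry w (A ∪ B) = bdry w A + bdry w B := by
  have key : ∀ (X Y : Finset V), Disjoint X Y →
      (∀ x ∈ X, ∀ y ∈ Y, w x y = 0) → ∀ x ∈ X,
      ((↑(X ∪ Y) : Set V)ᶜ).indicator (w x) = ((↑X : Set V)ᶜ).indicator (w x) := by
    intro X Y hdXY hXY x hx
    funext u
    by_cases hu : u ∈ X
    · rw [Set.indicator_of_notMem (by simp [hu]), Set.indicator_of_notMem (by simp [hu])]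
    · by_cases hu2 : u ∈ Y
      · rw [Set.indicator_of_notMem (by simp [hu2]),
          Set.indicator_of_mem (by simpa using hu)]
        exact (hXY x hx u hu2).symm
      · rw [Set.indicator_of_mem (by simp [hu, hu2]),
          Set.indicator_of_mem (by simpa using hu)]
  unfold bdry
  rw [Finset.sum_union hd]
  congr 1
  · exact Finset.sum_congr rfl fun x hx => by rw [key A B hd hAB x hx]
  · refine Finset.sum_congr rfl fun x hx => ?_
    rw [show A ∪ B = B ∪ A from Finset.union_comm A B, key B A hd.symm hBA x hx]

lemma isol_union_of_no_edges {w : V → V → ℝ} (hnn : ∀ u v, 0 ≤ w u v)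
    (i : ℝ) {A B : Finset V} (hd : Disjoint A B)
    (hAB : ∀ a ∈ A, ∀ b ∈ B, w a b = 0) (hBA : ∀ b ∈ B, ∀ a ∈ A, w b a = 0) :
    isol i w (A ∪ B) = isol i w A + isol i w B := by
  unfold isol
  rw [bdry_union_of_no_edges hnn hd hAB hBA, show vol w (A ∪ B) = vol w A + vol w B from
    Finset.sum_union hd]
  ring

lemma isCore_mono {w : V → V → ℝ} (hnn : ∀ u v, 0 ≤ w u v) {k i : ℝ} (hki : k ≤ i)
    {T : Finset V} (hT : IsCore k w T) : IsCore i w T := by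
  intro A hA
  have h1 := hT A hA
  have h2 : vol w A ≤ vol w T := vol_mono w hnn hA.subset
  have e1 : isol i w A = isol k w A + (i - k) * vol w A := by unfold isol; ring
  have e2 : isol i w T = isol k w T + (i - k) * vol w T := by unfold isol; ring
  rw [e1, e2]
  have : (i - k) * vol w A ≤ (i - k) * vol w T :=
    mul_le_mul_of_nonneg_left h2 (by linarith)
  linarith

lemma bdry_ge_one {w : V → V → ℝ} [Infinite V] (hsymm : ∀ u v, w u v = w v u)
    (hnn : ∀ u v, 0 ≤ w u v) (hsum : ∀ v, Summable (w v))
    (hw1 : ∀ u v, w u v ≠ 0 → 1 ≤ w u v) (hconn : (gra w).Connected)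
    {T : Finset V} (hne : T.Nonempty) : 1 ≤ bdry w T := by
  obtain ⟨x, hx⟩ := hne
  obtain ⟨y, hy⟩ := Infinite.exists_notMem_finset T
  obtain ⟨p⟩ := hconn.preconnected x y
  obtain ⟨d, -, hd1, hd2⟩ := p.exists_boundary_dart (↑T : Set V) (by simpa using hx)
    (by simpa using hy)
  have hadj : (gra w).Adj d.fst d.snd := d.adj
  rw [gra_adj hsymm] at hadj
  have h1 : (1 : ℝ) ≤ w d.fst d.snd := hw1 _ _ (ne_of_gt hadj.2)
  have hind : ∀ u, 0 ≤ ((↑T : Set V)ᶜ).indicator (w d.fst) u :=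
    fun u => Set.indicator_nonneg (fun u' _ => hnn _ u') u
  have hsummable : Summable (((↑T : Set V)ᶜ).indicator (w d.fst)) :=
    (hsum d.fst).indicator _
  have h2 : w d.fst d.snd ≤ ∑' u, ((↑T : Set V)ᶜ).indicator (w d.fst) u := by
    have he : ((↑T : Set V)ᶜ).indicator (w d.fst) d.snd = w d.fst d.snd :=
      Set.indicator_of_mem (Set.mem_compl hd2) (w d.fst)
    have := Summable.le_tsum hsummable d.snd (fun u _ => hind u)
    rwa [he] at this
  have h3 : ∑' u, ((↑T : Set V)ᶜ).indicator (w d.fst) u ≤ bdry w T := by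
    refine Finset.single_le_sum (f := fun v => ∑' u, ((↑T : Set V)ᶜ).indicator (w v) u)
      (fun v _ => tsum_nonneg (fun u => Set.indicator_nonneg (fun u' _ => hnn _ u') u))
      (by exact_mod_cast hd1)
  linarith

/-- Every vertex of a core lies in a connected sub-core. -/
lemma core_component {w : V → V → ℝ} (hsymm : ∀ u v, w u v = w v u)
    (hnn : ∀ u v, 0 ≤ w u v) {k : ℝ} {T : Finset V} (hT : IsCore k w T)
    {v : V} (hv : v ∈ T) :
    ∃ D : Finset V, v ∈ D ∧ D ⊆ T ∧ IsCore k w D ∧ ConnSet w (↑D : Set V) := by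
  classical
  set G' := SimpleGraph.induce (↑T : Set V) (gra w) with hG'
  set P : V → Prop := fun u => ∃ hu : u ∈ T, G'.Reachable ⟨v, by simpa using hv⟩ ⟨u, by simpa using hu⟩ with hP
  set D : Finset V := T.filter P with hD
  have hvD : v ∈ D := Finset.mem_filter.2 ⟨hv, hv, SimpleGraph.Reachable.refl _⟩
  have hDT : D ⊆ T := Finset.filter_subset _ _
  -- closure under adjacency within T
  have hclose : ∀ u ∈ D, ∀ u' ∈ T, (gra w).Adj u u' → u' ∈ D := by
    intro u hu u' hu' hadj
    obtain ⟨huT, hreach⟩ := (Finset.mem_filter.1 hu).2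
    refine Finset.mem_filter.2 ⟨hu', hu', hreach.trans (SimpleGraph.Adj.reachable ?_)⟩
    show G'.Adj ⟨u, by simpa using huT⟩ ⟨u', by simpa using hu'⟩
    simpa [hG'] using hadj
  -- no edges between D and T \ D
  have hzero : ∀ a ∈ D, ∀ b ∈ T \ D, w a b = 0 := by
    intro a ha b hb
    by_contra hw
    have hpos : 0 < w a b := lt_of_le_of_ne (hnn a b) (Ne.symm hw)
    obtain ⟨hbT, hbD⟩ := Finset.mem_sdiff.1 hb
    have hab : a ≠ b := by rintro rfl; exact hbD ha
    exact hbD (hclose a ha b hbT ((gra_adj hsymm).2 ⟨hab, hpos⟩))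
  have hzero' : ∀ b ∈ T \ D, ∀ a ∈ D, w b a = 0 := by
    intro b hb a ha; rw [hsymm]; exact hzero a ha b hb
  have hdisj : Disjoint D (T \ D) := Finset.disjoint_sdiff
  have hunion : D ∪ (T \ D) = T := Finset.union_sdiff_of_subset hDT
  refine ⟨D, hvD, hDT, ?_, ?_⟩
  · -- D is a core
    intro A hA
    have hAD : A ⊆ D := hA.subset
    have hsub : A ∪ (T \ D) ⊆ T := Finset.union_subset (hAD.trans hDT) (Finset.sdiff_subset)
    obtain ⟨d, hdD, hdA⟩ := Finset.exists_of_ssubset hA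
    have hssub : A ∪ (T \ D) ⊂ T := by
      refine (Finset.ssubset_iff_of_subset hsub).2 ⟨d, hDT hdD, ?_⟩
      simp only [Finset.mem_union, Finset.mem_sdiff]
      rintro (h | ⟨-, h⟩)
      · exact hdA h
      · exact h hdD
    have h1 := hT _ hssub
    have hdisjA : Disjoint A (T \ D) := Finset.disjoint_left.2
      (fun x hx hx2 => (Finset.mem_sdiff.1 hx2).2 (hAD hx))
    rw [isol_union_of_no_edges hnn k hdisjA
        (fun a ha b hb => hzero a (hAD ha) b hb)
        (fun b hb a ha => hzero' b hb a (hAD ha))] at h1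
    have h2 : isol k w T = isol k w D + isol k w (T \ D) := by
      rw [← isol_union_of_no_edges hnn k hdisj hzero hzero', hunion]
    rw [h2] at h1
    linarith
  · -- D is connected
    rw [ConnSet, SimpleGraph.connected_iff_exists_forall_reachable]
    refine ⟨⟨v, by simpa using hvD⟩, ?_⟩
    rintro ⟨b, hb⟩
    have hbD : b ∈ D := by simpa using hb
    obtain ⟨hbT, hreach⟩ := (Finset.mem_filter.1 hbD).2
    obtain ⟨p⟩ := hreach
    -- transfer the walk into the induced graph on D
    suffices h : ∀ (x y : (↑T : Set V)) (p : G'.Walk x y) (hx : (x : V) ∈ D),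
        ∃ hy : (y : V) ∈ D, (SimpleGraph.induce (↑D : Set V) (gra w)).Reachable
          ⟨(x : V), by simpa using hx⟩ ⟨(y : V), by simpa using hy⟩ by
      obtain ⟨hy, hr⟩ := h _ _ p hvD
      exact hr
    intro x y p
    induction p with
    | nil => exact fun hx => ⟨hx, SimpleGraph.Reachable.refl _⟩
    | @cons a c y h q ih =>
        intro hx
        have hadj : (gra w).Adj (a : V) (c : V) := by simpa [hG'] using h
        have hcD : (c : V) ∈ D := hclose _ hx _ (by simpa using c.2) hadj
        obtain ⟨hy, hr⟩ := ih hcD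
        refine ⟨hy, SimpleGraph.Reachable.trans (SimpleGraph.Adj.reachable ?_) hr⟩
        show (SimpleGraph.induce (↑D : Set V) (gra w)).Adj
          ⟨(a : V), by simpa using hx⟩ ⟨(c : V), by simpa using hcD⟩
        simpa using hadj

end Helpers

section Main

variable {V : Type*}

lemma key_contra {w : V → V → ℝ} [Infinite V]
    (hsymm : ∀ u v, w u v = w v u) (hnn : ∀ u v, 0 ≤ w u v)
    (hsum : ∀ v, Summable (w v)) (hw1 : ∀ u v, w u v ≠ 0 → 1 ≤ w u v)
    (hconn : (gra w).Connected)
    {i k i' : ℝ} (hk0 : 0 < k) (hki : k ≤ i) (hk' : 1 / i' ≤ 1 / k)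
    {T : Finset V} (hT : IsCore k w T) {v : V} (hvT : v ∈ T)
    {C : Finset V} (hC : IsIsland i w (↑C : Set V)) (hvC : v ∈ C)
    (hvol : vol w C ≤ 1 / i') : False := by
  obtain ⟨D, hvD, hDT, hDcore, hDconn⟩ := core_component hsymm hnn hT hvT
  have hDne : D.Nonempty := ⟨v, hvD⟩
  have hpos : 0 < isol k w D := core_isol_pos hDcore hDne
  have hb1 : 1 ≤ bdry w D := bdry_ge_one hsymm hnn hsum hw1 hconn hDne
  have hvolD : 1 / k < vol w D := by
    rw [div_lt_iff₀ hk0]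
    have : k * vol w D - bdry w D = isol k w D := rfl
    nlinarith [hpos, hb1]
  -- D is an i-core, hence contained in coreUnion i
  have hDi : IsCore i w D := isCore_mono hnn hki hDcore
  have hDsub : (↑D : Set V) ⊆ coreUnion i w := fun u hu => ⟨D, hDi, by simpa using hu⟩
  -- C ∪ D is connected and inside coreUnion i, so by maximality D ⊆ C
  obtain ⟨hCne, hCsub, hCconn, hmax⟩ := hC
  have hunion : ConnSet w ((↑C : Set V) ∪ (↑D : Set V)) :=
    SimpleGraph.induce_union_connected hCconn.preconnected hDconn.preconnected ⟨v, by simpa using hvC, by simpa using hvD⟩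
  have heq : (↑C : Set V) ∪ (↑D : Set V) = (↑C : Set V) :=
    hmax _ Set.subset_union_left (Set.union_subset hCsub hDsub) hunion
  have hDC : D ⊆ C := by
    intro u hu
    have : (u : V) ∈ (↑C : Set V) ∪ (↑D : Set V) := Or.inr (by simpa using hu)
    rw [heq] at this
    simpa using this
  have := vol_mono w hnn hDC
  linarith

end Main

theorem sink_islands (w : V → V → ℝ) [Infinite V]
    (hsymm : ∀ u v, w u v = w v u) (hnn : ∀ u v, 0 ≤ w u v)
    (hsum : ∀ v, Summable (w v))
    (hw1 : ∀ u v, w u v ≠ 0 → 1 ≤ w u v)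
    (hconn : (gra w).Connected)
    (i : ℝ) (hi0 : 0 < i) (hi1 : i < 1) (hanch : Anchored i w)
    (i' : ℝ) (hi'0 : 0 < i')
    (S : Set V)
    (hS : ∀ v ∈ S, ∃ C : Finset V,
      IsIsland i w (↑C : Set V) ∧ v ∈ C ∧ (↑C : Set V) ⊆ S ∧ vol w C ≤ 1 / i') :
    Disjoint S (coreUnion i' w) := by
  rw [Set.disjoint_left]
  intro v hvS hvA
  obtain ⟨C, hIsl, hvC, hCS, hvolC⟩ := hS v hvS
  obtain ⟨T, hT, hvT⟩ := hvA
  rcases le_total i i' with h | h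
  · -- use an i-core containing v, coming from the island
    obtain ⟨T₂, hT₂, hvT₂⟩ := hIsl.2.1 (by simpa using hvC)
    exact key_contra hsymm hnn hsum hw1 hconn hi0 le_rfl
      (one_div_le_one_div_of_le hi0 h) hT₂ hvT₂ hIsl hvC hvolC
  · exact key_contra hsymm hnn hsum hw1 hconn hi'0 h le_rfl hT hvT hIsl hvC hvolC
end
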